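/- Rational quasi-cluster maps compose: if σ : (𝒜,𝐬) ⇢ (𝒜',𝐬') is rational quasi-cluster with data (J̃, S') and injection ι, and σ' : (𝒜',𝐬') ⇢ (𝒜'',𝐬'') is rational quasi-cluster with data (J̃', S'') and injection ι', and if ι(J̃) ⊆ J̃', then σ' ∘ σ is rational quasi-cluster with data (J̃, S'' ∪ ι'(S' ∩ J̃')). -/
import Mathlib


open scoped BigOperators

/-- A (labeled) seed in an ambient field `K`: an index set `J`, a set of mutable (unfrozen)
vertices, cluster variables `A : J → K`, and an exchange matrix `ε` (with integer entries
in the rows and columns relevant to mutable vertices). -/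
structure Seed (K : Type*) [Field K] (J : Type*) [Fintype J] [DecidableEq J] where
  uf : Finset J
  A : J → K
  ε : J → J → ℤ

variable {K K' K'' : Type*} [Field K] [Field K'] [Field K'']
variable {J J' J'' : Type*} [Fintype J] [DecidableEq J] [Fintype J'] [DecidableEq J']
  [Fintype J''] [DecidableEq J'']

/-- The exchange ratio `X_i = ∏_j A_j^{ε_{ij}}` of a seed. -/
noncomputable def Seed.X (s : Seed K J) (i : J) : K := ∏ j, s.A j ^ s.ε i j

/-- A field embedding `σ : K → K'` is a *rational quasi-cluster map* from the seed `s` to the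
seed `s'`, with data `(J̃, ι, S')`, if: `J_uf ⊆ J̃`; `ι` is injective on `J̃` and maps `J_uf`
into `J'_uf`; `S' ⊆ J' ∖ ι(J̃)`; for `i ∈ J̃`, `σ(A_i)` equals `A'_{ι i}` times a Laurent
monomial in `{A'_j : j ∈ S'}`; for `i ∈ J_uf`, `σ(X_i) = X'_{ι i}`; and for `i ∉ J̃`,
`σ(A_i)` is a Laurent monomial in `{A'_j : j ∈ S'}`. -/
structure IsRQC (σ : K →+* K') (s : Seed K J) (s' : Seed K' J')
    (Jt : Finset J) (ι : J → J') (S' : Finset J') : Prop where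
  uf_sub : s.uf ⊆ Jt
  inj : Set.InjOn ι ↑Jt
  maps_uf : ∀ i ∈ s.uf, ι i ∈ s'.uf
  disj : ∀ j ∈ S', ∀ i ∈ Jt, ι i ≠ j
  laurent : ∀ i ∈ Jt, ∃ m : J' → ℤ,
    σ (s.A i) = s'.A (ι i) * ∏ j ∈ S', s'.A j ^ m j
  exch : ∀ i ∈ s.uf, σ (s.X i) = s'.X (ι i)
  frozen_mono : ∀ i, i ∉ Jt → ∃ m : J' → ℤ,
    σ (s.A i) = ∏ j ∈ S', s'.A j ^ m j

section MonoHelpers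

variable {L : Type*} [Field L] {ι₀ : Type*}

private lemma zpow_mul_zpow_exists (a : L) (p q : ℤ) : ∃ c : ℤ, a ^ p * a ^ q = a ^ c := by
  by_cases ha : a = 0
  · subst ha
    by_cases hp : p = 0
    · exact ⟨q, by simp [hp]⟩
    · exact ⟨1, by simp [zero_zpow p hp]⟩
  · exact ⟨p + q, (zpow_add₀ ha p q).symm⟩

private lemma zpow_zpow_exists (a : L) (p e : ℤ) : ∃ c : ℤ, (a ^ p) ^ e = a ^ c := by
  by_cases ha : a = 0
  · subst ha
    by_cases hp : p = 0
    · exact ⟨0, by simp [hp]⟩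
    · by_cases he : e = 0
      · exact ⟨0, by simp [he]⟩
      · exact ⟨1, by simp [zero_zpow p hp, zero_zpow e he]⟩
  · refine ⟨p * e, ?_⟩
    have : (Units.mk0 a ha : L) ^ (p * e) = ((Units.mk0 a ha : Lˣ) ^ p : Lˣ) ^ e := by
      norm_cast
      rw [zpow_mul]
    simpa using this.symm

/-- `x` is a Laurent monomial in the variables `A j`, `j ∈ T`. -/
private def IsMono (A : ι₀ → L) (T : Finset ι₀) (x : L) : Prop :=
  ∃ m : ι₀ → ℤ, x = ∏ j ∈ T, A j ^ m j

private lemma IsMono.one (A : ι₀ → L) (T : Finset ι₀) : IsMono A T 1 :=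
  ⟨0, by simp⟩

private lemma IsMono.mul {A : ι₀ → L} {T : Finset ι₀} {x y : L}
    (hx : IsMono A T x) (hy : IsMono A T y) : IsMono A T (x * y) := by
  obtain ⟨m, rfl⟩ := hx
  obtain ⟨n, rfl⟩ := hy
  choose c hc using fun j => zpow_mul_zpow_exists (A j) (m j) (n j)
  exact ⟨c, by rw [← Finset.prod_mul_distrib]; exact Finset.prod_congr rfl fun j _ => hc j⟩

private lemma IsMono.zpow {A : ι₀ → L} {T : Finset ι₀} {x : L}
    (hx : IsMono A T x) (e : ℤ) : IsMono A T (x ^ e) := by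
  obtain ⟨m, rfl⟩ := hx
  choose c hc using fun j => zpow_zpow_exists (A j) (m j) e
  refine ⟨c, ?_⟩
  rw [← Finset.prod_zpow]
  exact Finset.prod_congr rfl fun j _ => hc j

private lemma IsMono.prod {A : ι₀ → L} {T : Finset ι₀} {α : Type*} {s : Finset α} {f : α → L}
    (hf : ∀ i ∈ s, IsMono A T (f i)) : IsMono A T (∏ i ∈ s, f i) :=
  Finset.prod_induction f (IsMono A T) (fun _ _ => IsMono.mul) (IsMono.one A T) hf

end MonoHelpers

/-- **Composition of rational quasi-cluster maps.**
If `σ : (𝒜,𝐬) ⇢ (𝒜',𝐬')` is rational quasi-cluster with data `(J̃, ι, S')`, and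
`σ' : (𝒜',𝐬') ⇢ (𝒜'',𝐬'')` is rational quasi-cluster with data `(J̃', ι', S'')`, and
`ι(J̃) ⊆ J̃'`, then `σ' ∘ σ` is rational quasi-cluster with data
`(J̃, ι' ∘ ι, S'' ∪ ι'(S' ∩ J̃'))`. -/
theorem IsRQC.comp (σ : K →+* K') (σ' : K' →+* K'')
    (s : Seed K J) (s' : Seed K' J') (s'' : Seed K'' J'')
    (Jt : Finset J) (ι : J → J') (S' : Finset J')
    (Jt' : Finset J') (ι' : J' → J'') (S'' : Finset J'')
    (h : IsRQC σ s s' Jt ι S') (h' : IsRQC σ' s' s'' Jt' ι' S'')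
    (hsub : ∀ i ∈ Jt, ι i ∈ Jt') :
    IsRQC (σ'.comp σ) s s'' Jt (ι' ∘ ι) (S'' ∪ (S' ∩ Jt').image ι') := by
  classical
  set T := (S' ∩ Jt').image ι' with hT
  -- elements of the image are not in S''
  have himgS : ∀ l ∈ T, l ∉ S'' := by
    intro l hl hlS
    obtain ⟨k, hk, rfl⟩ := Finset.mem_image.mp hl
    exact h'.disj _ hlS k (Finset.mem_inter.mp hk).2 rfl
  have hdisjT : Disjoint S'' T := Finset.disjoint_right.mpr himgS
  -- combining a monomial over S'' with a product over T into one over the union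
  have hunion : ∀ p q : J'' → ℤ, ∃ r : J'' → ℤ,
      (∏ l ∈ S'', s''.A l ^ p l) * (∏ l ∈ T, s''.A l ^ q l)
        = ∏ l ∈ S'' ∪ T, s''.A l ^ r l := by
    intro p q
    refine ⟨fun l => if l ∈ S'' then p l else q l, ?_⟩
    rw [Finset.prod_union hdisjT]
    congr 1
    · exact (Finset.prod_congr rfl fun l hl => by simp [hl]).symm
    · exact (Finset.prod_congr rfl fun l hl => by simp [himgS l hl]).symm
  -- the key decomposition of the image under `σ'` of a monomial over `S'`
  have hkey : ∀ m : J' → ℤ, ∃ (q : J'' → ℤ) (M : K''), IsMono s''.A S'' M ∧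
      ∏ j ∈ S', σ' (s'.A j) ^ m j = (∏ l ∈ T, s''.A l ^ q l) * M := by
    intro m
    have hfac : ∀ j : J', ∃ Mj : K'', IsMono s''.A S'' Mj ∧
        σ' (s'.A j) ^ m j = (if j ∈ Jt' then s''.A (ι' j) ^ m j else 1) * Mj := by
      intro j
      by_cases hjt : j ∈ Jt'
      · obtain ⟨n, hn⟩ := h'.laurent j hjt
        refine ⟨(∏ l ∈ S'', s''.A l ^ n l) ^ m j, IsMono.zpow ⟨n, rfl⟩ _, ?_⟩
        rw [hn, mul_zpow, if_pos hjt]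
      · obtain ⟨n, hn⟩ := h'.frozen_mono j hjt
        refine ⟨σ' (s'.A j) ^ m j, ?_, by rw [if_neg hjt, one_mul]⟩
        rw [hn]
        exact IsMono.zpow ⟨n, rfl⟩ _
    choose Mj hMj hMeq using hfac
    -- exponent function on the image
    have hinj : Set.InjOn ι' ↑(S' ∩ Jt') :=
      h'.inj.mono (by intro x hx; exact (Finset.mem_inter.mp hx).2)
    refine ⟨fun l => if hl : ∃ j ∈ S' ∩ Jt', ι' j = l then m hl.choose else 0,
      ∏ j ∈ S', Mj j, IsMono.prod fun j _ => hMj j, ?_⟩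
    have h1 : ∏ j ∈ S', σ' (s'.A j) ^ m j
        = (∏ j ∈ S', if j ∈ Jt' then s''.A (ι' j) ^ m j else 1) * ∏ j ∈ S', Mj j := by
      rw [← Finset.prod_mul_distrib]
      exact Finset.prod_congr rfl fun j _ => hMeq j
    rw [h1]
    congr 1
    rw [← Finset.prod_filter, Finset.filter_mem_eq_inter]
    rw [Finset.prod_image (fun x hx y hy hxy => hinj hx hy hxy)]
    refine Finset.prod_congr rfl fun j hj => ?_
    have hex : ∃ k ∈ S' ∩ Jt', ι' k = ι' j := ⟨j, hj, rfl⟩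
    beta_reduce
    rw [dif_pos hex]
    congr 1
    exact congrArg m (hinj hex.choose_spec.1 hj hex.choose_spec.2).symm
  constructor
  · exact h.uf_sub
  · exact h'.inj.comp h.inj fun x hx => by
      simpa using hsub x (by simpa using hx)
  · intro i hi
    exact h'.maps_uf _ (h.maps_uf i hi)
  · intro j hj i hi
    rcases Finset.mem_union.mp hj with hj | hj
    · exact h'.disj j hj (ι i) (hsub i hi)
    · obtain ⟨k, hk, rfl⟩ := Finset.mem_image.mp hj
      intro hEq
      have : ι i = k := h'.inj (by exact_mod_cast hsub i hi)
        (by exact_mod_cast (Finset.mem_inter.mp hk).2) hEq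
      exact h.disj k (Finset.mem_inter.mp hk).1 i hi this
  · intro i hi
    obtain ⟨m, hm⟩ := h.laurent i hi
    obtain ⟨m₀, hm₀⟩ := h'.laurent (ι i) (hsub i hi)
    obtain ⟨q, M, hM, hMeq⟩ := hkey m
    obtain ⟨p, hp⟩ := IsMono.mul (⟨m₀, rfl⟩ : IsMono s''.A S'' _) hM
    obtain ⟨r, hr⟩ := hunion p q
    refine ⟨r, ?_⟩
    have : (σ'.comp σ) (s.A i)
        = σ' (s'.A (ι i)) * ∏ j ∈ S', σ' (s'.A j) ^ m j := by
      rw [RingHom.comp_apply, hm, map_mul, map_prod]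
      congr 1
      exact Finset.prod_congr rfl fun j _ => map_zpow₀ σ' _ _
    rw [this, hm₀, hMeq, ← hr, ← hp]
    simp only [Function.comp_apply]
    ring
  · intro i hi
    rw [RingHom.comp_apply, h.exch i hi, h'.exch (ι i) (h.maps_uf i hi)]
    rfl
  · intro i hi
    obtain ⟨m, hm⟩ := h.frozen_mono i hi
    obtain ⟨q, M, hM, hMeq⟩ := hkey m
    obtain ⟨p, hp⟩ := hM
    obtain ⟨r, hr⟩ := hunion p q
    refine ⟨r, ?_⟩
    have : (σ'.comp σ) (s.A i) = ∏ j ∈ S', σ' (s'.A j) ^ m j := by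
      rw [RingHom.comp_apply, hm, map_prod]
      exact Finset.prod_congr rfl fun j _ => map_zpow₀ σ' _ _
    rw [this, hMeq, ← hr, ← hp]
    ring
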